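/- Let d ≥ 2, let (g_j)_{j≥1} be a strictly increasing sequence of positive integers, let G_q = g_1·g_2···g_q, and for each q ≥ 1 let A_q = {G_r : r ≥ q} ∪ {-(d-1)·G_r : r ≥ q} ⊆ ℤ. Then for every h ≥ 1, the intersection over q of hA_q equals {0} if d divides h, and is empty otherwise. -/

import Mathlib

open Pointwise

/-- The `h`-fold sumset: all sums of `h` not necessarily distinct elements of `S`
(for `h ≥ 1`; by convention `hfold 0 S = S`). -/
def hfold {α : Type*} [Add α] : ℕ → Set α → Set α
  | 0, S => S
  | 1, S => S
  | n + 2, S => hfold (n + 1) S + S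

lemma hfold_succ_eq {α : Type*} [Add α] (S : Set α) (n : ℕ) (hn : 1 ≤ n) :
    hfold (n + 1) S = hfold n S + S := by
  match n, hn with
  | (m+1), _ => rfl

lemma mem_hfold_iff {α : Type*} [AddCommMonoid α] (S : Set α) :
    ∀ n, 1 ≤ n → ∀ x : α,
      (x ∈ hfold n S ↔ ∃ f : Fin n → α, (∀ i, f i ∈ S) ∧ ∑ i, f i = x) := by
  intro n
  induction n with
  | zero => omega
  | succ n ih =>
    intro _ x
    rcases Nat.eq_or_lt_of_le (Nat.one_le_iff_ne_zero.mpr (Nat.succ_ne_zero n)) with h1 | h1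
    · -- n = 0, so n+1 = 1
      have hn0 : n = 0 := by omega
      subst hn0
      constructor
      · intro hx
        exact ⟨fun _ => x, fun _ => hx, by simp⟩
      · rintro ⟨f, hf, hsum⟩
        have : ∑ i, f i = f 0 := by simp
        rw [this] at hsum
        exact (by simpa [hsum] using hf 0 : x ∈ S)
    · have hn1 : 1 ≤ n := by omega
      rw [hfold_succ_eq S n hn1]
      constructor
      · rintro ⟨a, ha, b, hb, rfl⟩
        obtain ⟨f, hf, hsum⟩ := (ih hn1 a).mp ha
        refine ⟨Fin.snoc f b, fun i => ?_, ?_⟩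
        · induction i using Fin.lastCases with
          | last => simpa [Fin.snoc_last] using hb
          | cast j => simpa [Fin.snoc_castSucc] using hf j
        · rw [Fin.sum_univ_castSucc]
          simp [Fin.snoc_last, Fin.snoc_castSucc, hsum]
      · rintro ⟨f, hf, rfl⟩
        rw [Fin.sum_univ_castSucc]
        exact ⟨∑ i : Fin n, f i.castSucc, (ih hn1 _).mpr ⟨fun i => f i.castSucc, fun i => hf _, rfl⟩, f (Fin.last n), hf _, rfl⟩

lemma add_mem_hfold {α : Type*} [AddCommMonoid α] {S : Set α} :
    ∀ n, 1 ≤ n → ∀ m, 1 ≤ m → ∀ x y : α, x ∈ hfold m S → y ∈ hfold n S →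
      x + y ∈ hfold (m + n) S := by
  intro n
  induction n with
  | zero => omega
  | succ n ih =>
    intro _ m hm x y hx hy
    rcases Nat.eq_zero_or_pos n with h1 | h1
    · subst h1
      rw [hfold_succ_eq S m hm]
      exact ⟨x, hx, y, hy, rfl⟩
    · rw [hfold_succ_eq S n h1] at hy
      obtain ⟨a, ha, b, hb, rfl⟩ := hy
      have : x + (a + b) = (x + a) + b := (add_assoc x a b).symm
      rw [this, show m + (n+1) = (m + n) + 1 by ring, hfold_succ_eq S _ (by omega)]
      exact ⟨x + a, ih h1 m hm x a hx ha, b, hb, rfl⟩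



lemma key_lemma (d h q : ℕ) (hd : 2 ≤ d) (G g : ℕ → ℕ)
    (hGpos : ∀ v, 0 < G v)
    (hGsucc : ∀ v, G (v + 1) = G v * g (v + 1))
    (hGdvd : ∀ v r, v ≤ r → G v ∣ G r)
    (hbig : ∀ v, q ≤ v → d * h < g (v + 1))
    (f : Fin h → ℤ) (r : Fin h → ℕ) (hr : ∀ i, q ≤ r i)
    (hf : ∀ i, f i = (G (r i) : ℤ) ∨ f i = -(((d : ℤ) - 1) * (G (r i) : ℤ))) :
    ∀ m : ℕ, ∀ s : Finset (Fin h), s.card = m → ∑ i ∈ s, f i = 0 → d ∣ m := by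
  intro m
  induction m using Nat.strong_induction_on with
  | _ m ih =>
    intro s hcard hsum
    rcases Finset.eq_empty_or_nonempty s with rfl | hs
    · have : m = 0 := by simpa using hcard.symm
      simp [this]
    · have himg : (s.image r).Nonempty := hs.image r
      set v := (s.image r).min' himg with hv
      have hvmem : v ∈ s.image r := Finset.min'_mem _ himg
      obtain ⟨i0, hi0s, hi0⟩ := Finset.mem_image.mp hvmem
      have hqv : q ≤ v := hi0 ▸ hr i0
      have hvle : ∀ i ∈ s, v ≤ r i := fun i hi =>
        Finset.min'_le _ _ (Finset.mem_image_of_mem r hi)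
      set t := s.filter (fun i => r i = v) with ht
      set s' := s.filter (fun i => ¬ r i = v) with hs'
      -- split sum
      have hsplit : ∑ i ∈ t, f i + ∑ i ∈ s', f i = 0 := by
        rw [ht, hs', Finset.sum_filter_add_sum_filter_not]; exact hsum
      -- analyze t
      set u := t.filter (fun i => f i = (G v : ℤ)) with hu
      set w := t.filter (fun i => ¬ f i = (G v : ℤ)) with hw
      have htsum : ∑ i ∈ t, f i = ((u.card : ℤ) - ((d : ℤ) - 1) * w.card) * (G v : ℤ) := by
        rw [show ∑ i ∈ t, f i = ∑ i ∈ u, f i + ∑ i ∈ w, f i by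
          rw [hu, hw, Finset.sum_filter_add_sum_filter_not]]
        have h1 : ∑ i ∈ u, f i = (u.card : ℤ) * (G v : ℤ) := by
          rw [Finset.sum_congr rfl (fun i hi => (Finset.mem_filter.mp hi).2)]
          rw [Finset.sum_const, nsmul_eq_mul]
        have h2 : ∑ i ∈ w, f i = w.card * (-(((d : ℤ) - 1) * (G v : ℤ))) := by
          rw [Finset.sum_congr rfl (fun i hi => ?_), Finset.sum_const, nsmul_eq_mul]
          have hiw := Finset.mem_filter.mp hi
          have hit : r i = v := (Finset.mem_filter.mp hiw.1).2
          rcases hf i with h' | h'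
          · exact absurd (hit ▸ h') hiw.2
          · rw [h', hit]
        rw [h1, h2]; ring
      -- elements of s' divisible by G v * g (v+1)
      have hs'dvd : ((G v : ℤ) * (g (v + 1) : ℤ)) ∣ ∑ i ∈ s', f i := by
        refine Finset.dvd_sum fun i hi => ?_
        have his := Finset.mem_filter.mp hi
        have hlt : v + 1 ≤ r i := by
          have := hvle i his.1
          omega
        have hdvd1 : (G (v + 1) : ℤ) ∣ (G (r i) : ℤ) := Int.natCast_dvd_natCast.mpr (hGdvd _ _ hlt)
        have hdvd2 : ((G v : ℤ) * (g (v + 1) : ℤ)) ∣ (G (r i) : ℤ) := by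
          rw [← Nat.cast_mul, ← hGsucc v]; exact hdvd1
        rcases hf i with h' | h' <;> rw [h']
        · exact hdvd2
        · exact dvd_neg.mpr (hdvd2.mul_left _)
      -- deduce coefficient zero
      set c : ℤ := (u.card : ℤ) - ((d : ℤ) - 1) * w.card with hc
      have hcGv : ∑ i ∈ s', f i = -(c * (G v : ℤ)) := by
        rw [← htsum]; linarith [hsplit]
      have hdvdc : ((g (v + 1) : ℤ)) ∣ c := by
        have : ((G v : ℤ) * (g (v + 1) : ℤ)) ∣ c * (G v : ℤ) := by
          rw [← dvd_neg, ← hcGv]; exact hs'dvd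
        have hGv0 : (G v : ℤ) ≠ 0 := by exact_mod_cast (hGpos v).ne'
        rw [mul_comm c _] at this
        exact (mul_dvd_mul_iff_left hGv0).mp this
      have hucard : u.card ≤ h := le_trans (Finset.card_le_card (by
          intro i hi
          exact (Finset.mem_filter.mp ((Finset.mem_filter.mp hi).1)).1))
        (by simpa using Finset.card_le_univ s)
      have hwcard : w.card ≤ h := le_trans (Finset.card_le_card (by
          intro i hi
          exact (Finset.mem_filter.mp ((Finset.mem_filter.mp hi).1)).1))
        (by simpa using Finset.card_le_univ s)
      have hczero : c = 0 := by
        by_contra hc0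
        have h1 : (g (v + 1) : ℤ) ≤ |c| := Int.le_of_dvd (abs_pos.mpr hc0) ((dvd_abs _ _).mpr hdvdc)
        have h2 : |c| ≤ (d : ℤ) * h := by
          rw [abs_le]
          constructor
          · have : ((d : ℤ) - 1) * w.card ≤ (d : ℤ) * h := by
              have : ((d : ℤ) - 1) * w.card ≤ (d : ℤ) * w.card := by
                have : (0:ℤ) ≤ w.card := Nat.cast_nonneg _
                nlinarith
              have h3 : (d : ℤ) * w.card ≤ (d : ℤ) * h := by
                have : (w.card : ℤ) ≤ h := by exact_mod_cast hwcard
                have hd0 : (0:ℤ) ≤ d := Nat.cast_nonneg _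
                nlinarith
              linarith
            have hu0 : (0:ℤ) ≤ u.card := Nat.cast_nonneg _
            rw [hc]; linarith
          · have : (u.card : ℤ) ≤ h := by exact_mod_cast hucard
            have hw0 : (0:ℤ) ≤ ((d:ℤ) - 1) * w.card := by
              have : (0:ℤ) ≤ w.card := Nat.cast_nonneg _
              have : (1:ℤ) ≤ d := by exact_mod_cast (by omega : 1 ≤ d)
              nlinarith
            have hh : (h : ℤ) ≤ (d:ℤ) * h := by
              have : (0:ℤ) ≤ h := Nat.cast_nonneg _
              have : (1:ℤ) ≤ d := by exact_mod_cast (by omega : 1 ≤ d)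
              nlinarith
            rw [hc]; linarith
        have h3 : ((d * h : ℕ) : ℤ) < (g (v + 1) : ℤ) := by
          exact_mod_cast hbig v hqv
        push_cast at h3
        linarith
      -- u.card = (d-1) * w.card
      have hcards : u.card = (d - 1) * w.card := by
        have : (u.card : ℤ) = ((d : ℤ) - 1) * w.card := by rw [hc] at hczero; linarith
        have hd1 : ((d : ℤ) - 1) = ((d - 1 : ℕ) : ℤ) := by
          have : (1:ℕ) ≤ d := by omega
          push_cast [this]; ring
        rw [hd1, ← Nat.cast_mul] at this
        exact_mod_cast this
      have htcard : t.card = d * w.card := by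
        have h1 : t.card = u.card + w.card := by
          rw [hu, hw]; exact (Finset.card_filter_add_card_filter_not _).symm
        have hd' : d - 1 + 1 = d := by omega
        calc t.card = (d - 1) * w.card + 1 * w.card := by rw [h1, hcards, one_mul]
          _ = ((d - 1) + 1) * w.card := (add_mul _ _ _).symm
          _ = d * w.card := by rw [hd']
      have htpos : 0 < t.card := by
        rw [ht]
        exact Finset.card_pos.mpr ⟨i0, Finset.mem_filter.mpr ⟨hi0s, hi0⟩⟩
      -- recurse
      have hs'sum : ∑ i ∈ s', f i = 0 := by
        rw [hcGv, hczero]; ring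
      have hts : t.card + s'.card = m := by
        rw [ht, hs', ← hcard]; exact Finset.card_filter_add_card_filter_not _
      have hlt : s'.card < m := by omega
      have hdvds' := ih s'.card hlt s' rfl hs'sum
      have hdvdt : d ∣ t.card := ⟨w.card, htcard⟩
      rw [← hts]
      exact Nat.dvd_add hdvdt hdvds'

theorem stmt15 (d : ℕ) (hd : 2 ≤ d) (g : ℕ → ℕ)
    (hgpos : ∀ j, 1 ≤ j → 0 < g j) (hgmono : ∀ j, 1 ≤ j → g j < g (j + 1))
    (G : ℕ → ℕ) (hG : ∀ q, G q = ∏ j ∈ Finset.Icc 1 q, g j)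
    (Aq : ℕ → Set ℤ)
    (hAq : ∀ q, Aq q = {x : ℤ | ∃ r : ℕ, q ≤ r ∧
      (x = (G r : ℤ) ∨ x = -(((d : ℤ) - 1) * (G r : ℤ)))}) :
    ∀ h : ℕ, 1 ≤ h →
      (⋂ q, ⋂ (_ : 1 ≤ q), hfold h (Aq q)) =
        if d ∣ h then ({0} : Set ℤ) else ∅ := by
  -- basic facts about G and g
  have hGpos : ∀ q, 0 < G q := by
    intro q
    rw [hG]
    exact Finset.prod_pos fun j hj => hgpos j (Finset.mem_Icc.mp hj).1
  have hGsucc : ∀ q, G (q + 1) = G q * g (q + 1) := by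
    intro q
    rw [hG, hG, Finset.prod_Icc_succ_top (by omega : 1 ≤ q + 1)]
  have hGdvd : ∀ v r, v ≤ r → G v ∣ G r := by
    intro v r hvr
    induction r, hvr using Nat.le_induction with
    | base => exact dvd_refl _
    | succ n hn ih => rw [hGsucc n]; exact ih.mul_right _
  have hgge : ∀ j, 1 ≤ j → j ≤ g j := by
    intro j hj
    induction j, hj using Nat.le_induction with
    | base => exact hgpos 1 le_rfl
    | succ n hn ih => have := hgmono n hn; omega
  have hGge : ∀ q, 1 ≤ q → q ≤ G q := by
    intro q hq
    refine le_trans (hgge q hq) ?_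
    rw [hG]
    exact Finset.single_le_prod' (fun j hj => hgpos j (Finset.mem_Icc.mp hj).1)
      (Finset.mem_Icc.mpr ⟨hq, le_rfl⟩)
  -- divisibility of all elements of hfold n (Aq q) by G q
  have hdvd_hfold : ∀ n, 1 ≤ n → ∀ q x, x ∈ hfold n (Aq q) → (G q : ℤ) ∣ x := by
    intro n hn q x hx
    obtain ⟨f, hf, rfl⟩ := (mem_hfold_iff (Aq q) n hn x).mp hx
    refine Finset.dvd_sum fun i _ => ?_
    have := hf i
    rw [hAq] at this
    obtain ⟨r, hqr, hfr | hfr⟩ := this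
    · rw [hfr]; exact_mod_cast hGdvd q r hqr
    · rw [hfr]
      exact dvd_neg.mpr (Dvd.dvd.mul_left (by exact_mod_cast hGdvd q r hqr) _)
  -- any element of the intersection is 0
  have hinter_zero : ∀ h, 1 ≤ h → ∀ x : ℤ,
      (∀ q, 1 ≤ q → x ∈ hfold h (Aq q)) → x = 0 := by
    intro h hh x hx
    by_contra hx0
    set q := x.natAbs + 1 with hq
    have h1 : (G q : ℤ) ∣ x := hdvd_hfold h hh q x (hx q (by omega))
    have h2 : (G q : ℤ) ≤ |x| := Int.le_of_dvd (abs_pos.mpr hx0) ((dvd_abs _ _).mpr h1)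
    have h3 : q ≤ G q := hGge q (by omega)
    have h4 : |x| = (x.natAbs : ℤ) := (Int.abs_eq_natAbs x).trans rfl
    rw [h4] at h2
    have : (q : ℤ) ≤ (x.natAbs : ℤ) := le_trans (by exact_mod_cast h3) h2
    rw [hq] at this
    push_cast at this
    omega
  -- membership constructions
  have hmulmem : ∀ q, ∀ m, 1 ≤ m → ((m : ℤ) * (G q : ℤ)) ∈ hfold m (Aq q) := by
    intro q m hm
    induction m, hm using Nat.le_induction with
    | base =>
      show (1 : ℤ) * (G q : ℤ) ∈ Aq q
      rw [one_mul, hAq]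
      exact ⟨q, le_rfl, Or.inl rfl⟩
    | succ n hn ih =>
      have hmem : (G q : ℤ) ∈ hfold 1 (Aq q) := by
        show (G q : ℤ) ∈ Aq q
        rw [hAq]; exact ⟨q, le_rfl, Or.inl rfl⟩
      have := add_mem_hfold 1 le_rfl n hn _ _ ih hmem
      have heq : ((n : ℤ)) * (G q : ℤ) + (G q : ℤ) = ((n + 1 : ℕ) : ℤ) * (G q : ℤ) := by
        push_cast; ring
      rwa [heq] at this
  have hzero_d : ∀ q, (0 : ℤ) ∈ hfold d (Aq q) := by
    intro q
    have h1 : ((d - 1 : ℕ) : ℤ) * (G q : ℤ) ∈ hfold (d - 1) (Aq q) :=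
      hmulmem q (d - 1) (by omega)
    have h2 : -(((d : ℤ) - 1) * (G q : ℤ)) ∈ hfold 1 (Aq q) := by
      show _ ∈ Aq q
      rw [hAq]; exact ⟨q, le_rfl, Or.inr rfl⟩
    have := add_mem_hfold 1 le_rfl (d - 1) (by omega) _ _ h1 h2
    have heq : ((d - 1 : ℕ) : ℤ) * (G q : ℤ) + -(((d : ℤ) - 1) * (G q : ℤ)) = 0 := by
      have : ((d - 1 : ℕ) : ℤ) = (d : ℤ) - 1 := by
        have : (1:ℕ) ≤ d := by omega
        push_cast [this]; ring
      rw [this]; ring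
    rw [heq] at this
    have hdd : d - 1 + 1 = d := by omega
    rwa [hdd] at this
  have hzero_dk : ∀ q, ∀ k, 1 ≤ k → (0 : ℤ) ∈ hfold (d * k) (Aq q) := by
    intro q k hk
    induction k, hk using Nat.le_induction with
    | base => rw [mul_one]; exact hzero_d q
    | succ n hn ih =>
      have := add_mem_hfold d (by omega) (d * n) (Nat.mul_pos (by omega : 0 < d) hn) _ _ ih (hzero_d q)
      have heq : (0 : ℤ) + 0 = 0 := by ring
      rw [heq] at this
      rwa [show d * (n + 1) = d * n + d by ring]
  intro h hh
  ext x
  simp only [Set.mem_iInter]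
  split_ifs with hdh
  · simp only [Set.mem_singleton_iff]
    constructor
    · exact fun hx => hinter_zero h hh x hx
    · rintro rfl q hq
      obtain ⟨k, rfl⟩ := hdh
      have hk : 1 ≤ k := by
        rcases Nat.eq_zero_or_pos k with rfl | h'; · simp at hh
        · exact h'
      exact hzero_dk q k hk
  · simp only [Set.mem_empty_iff_false, iff_false, not_forall]
    by_contra hx
    push_neg at hx
    have hx0 : x = 0 := hinter_zero h hh x hx
    subst hx0
    set q := d * h + 1 with hq
    have hmem : (0 : ℤ) ∈ hfold h (Aq q) := hx q (by omega)
    obtain ⟨f, hf, hsum⟩ := (mem_hfold_iff (Aq q) h hh 0).mp hmem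
    have hchoice : ∀ i : Fin h, ∃ r : ℕ, q ≤ r ∧
        (f i = (G r : ℤ) ∨ f i = -(((d : ℤ) - 1) * (G r : ℤ))) := by
      intro i
      have := hf i
      rw [hAq] at this
      exact this
    choose r hrq hfr using hchoice
    have hbig : ∀ v, q ≤ v → d * h < g (v + 1) := by
      intro v hv
      have h1 : v + 1 ≤ g (v + 1) := hgge (v + 1) (by omega)
      omega
    have := key_lemma d h q hd G g hGpos hGsucc hGdvd hbig f r hrq hfr h
      Finset.univ (by simp) (by simpa using hsum)
    exact hdh this
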